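/- Every finite simple graph with n vertices and m edges contains an independent set of size at least n² / (2·(4m + n)); in particular, of size Ω(min{n²/m, n}). -/

import Mathlib

open Finset

lemma greedy_indep {V : Type*} [DecidableEq V] (G : SimpleGraph V) [DecidableRel G.Adj]
    (D : ℕ) : ∀ T : Finset V, (∀ v ∈ T, (T.filter (G.Adj v)).card ≤ D) →
      ∃ S ⊆ T, (∀ u ∈ S, ∀ v ∈ S, ¬ G.Adj u v) ∧ T.card ≤ S.card * (D + 1) := by
  intro T
  induction T using Finset.strongInduction with
  | _ T ih =>
    intro hT
    rcases T.eq_empty_or_nonempty with rfl | ⟨v, hv⟩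
    · exact ⟨∅, Finset.Subset.refl _, by simp, by simp⟩
    · set X : Finset V := insert v (T.filter (G.Adj v)) with hX
      have hvX : v ∈ X := mem_insert_self _ _
      have hssub : T \ X ⊂ T := by
        refine Finset.sdiff_ssubset ?_ ?_
        · intro x hx
          rcases mem_insert.mp hx with rfl | hx
          · exact hv
          · exact (mem_filter.mp hx).1
        · exact ⟨v, hvX⟩
      obtain ⟨S', hS'sub, hS'ind, hS'card⟩ := ih (T \ X) hssub (fun u hu => by
        refine le_trans (card_le_card ?_) (hT u (sdiff_subset hu))
        exact filter_subset_filter _ sdiff_subset)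
      have hvS' : v ∉ S' := fun h => by
        have := hS'sub h
        exact (mem_sdiff.mp this).2 hvX
      refine ⟨insert v S', ?_, ?_, ?_⟩
      · intro x hx
        rcases mem_insert.mp hx with rfl | hx
        · exact hv
        · exact sdiff_subset (hS'sub hx)
      · intro u hu w hw
        have key : ∀ w ∈ S', ¬ G.Adj v w := by
          intro w hw hadj
          have hwT : w ∈ T \ X := hS'sub hw
          exact (mem_sdiff.mp hwT).2 (mem_insert_of_mem (mem_filter.mpr ⟨(mem_sdiff.mp hwT).1, hadj⟩))
        rcases mem_insert.mp hu with hu1 | hu1 <;> rcases mem_insert.mp hw with hw1 | hw1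
        · rw [hu1, hw1]; exact G.loopless.irrefl v
        · rw [hu1]; exact key w hw1
        · rw [hw1]; intro h; exact key u hu1 h.symm
        · exact hS'ind u hu1 w hw1
      · have h1 : T.card ≤ (T \ X).card + X.card := by
          have := Finset.le_card_sdiff X T
          omega
        have h2 : X.card ≤ D + 1 := le_trans (card_insert_le _ _) (by
          have := hT v hv; omega)
        rw [card_insert_of_notMem hvS']
        calc T.card ≤ (T \ X).card + X.card := h1
          _ ≤ S'.card * (D + 1) + (D + 1) := by omega
          _ = (S'.card + 1) * (D + 1) := by ring

theorem statement19 (V : Type*) [Fintype V] [DecidableEq V] (G : SimpleGraph V)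
    [DecidableRel G.Adj] :
    ∃ S : Finset V, (∀ u ∈ S, ∀ v ∈ S, ¬ G.Adj u v) ∧
      (Fintype.card V : ℝ) ^ 2 /
          (2 * (4 * (G.edgeFinset.card : ℝ) + (Fintype.card V : ℝ))) ≤ (S.card : ℝ) := by
  set n := Fintype.card V with hn
  set m := G.edgeFinset.card with hm
  rcases Nat.eq_zero_or_pos n with h0 | hpos
  · exact ⟨∅, by simp, by rw [h0]; simp⟩
  set D := 4 * m / n with hD
  set T : Finset V := univ.filter (fun v => G.degree v ≤ D) with hT
  have hTdeg : ∀ v ∈ T, (T.filter (G.Adj v)).card ≤ D := by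
    intro v hv
    calc (T.filter (G.Adj v)).card ≤ (univ.filter (G.Adj v)).card :=
          card_le_card (filter_subset_filter _ (subset_univ _))
      _ = G.degree v := by rw [SimpleGraph.degree]; congr 1; ext; simp [SimpleGraph.mem_neighborFinset]
      _ ≤ D := (mem_filter.mp hv).2
  obtain ⟨S, hSsub, hSind, hScard⟩ := greedy_indep G D T hTdeg
  refine ⟨S, hSind, ?_⟩
  -- complement count bound
  set Tc : Finset V := univ.filter (fun v => ¬ G.degree v ≤ D) with hTc
  have hsplit : T.card + Tc.card = n := by
    rw [hT, hTc, Finset.card_filter_add_card_filter_not]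
    exact hn
  have hTcBound : Tc.card * (D + 1) ≤ 2 * m := by
    calc Tc.card * (D + 1) ≤ ∑ v ∈ Tc, G.degree v := by
          have h := Finset.card_nsmul_le_sum Tc (fun v => G.degree v) (D+1)
            (fun x hx => show D + 1 ≤ G.degree x from Nat.succ_le_of_lt (Nat.lt_of_not_le (mem_filter.mp hx).2))
          simpa [smul_eq_mul] using h
      _ ≤ ∑ v ∈ univ, G.degree v := Finset.sum_le_sum_of_subset (subset_univ _)
      _ = 2 * m := G.sum_degrees_eq_twice_card_edges
  -- nat division facts
  have hnD : n * D ≤ 4 * m := by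
    rw [hD, mul_comm]; exact Nat.div_mul_le_self (4 * m) n
  have h4m : 4 * m < (D + 1) * n := by
    have : 4 * m / n < D + 1 := by omega
    exact (Nat.div_lt_iff_lt_mul hpos).mp this
  -- pass to reals
  have hnR : (0:ℝ) < (n:ℝ) := by exact_mod_cast hpos
  have hA : (T.card : ℝ) ≤ (S.card : ℝ) * ((D:ℝ) + 1) := by exact_mod_cast hScard
  have hB : (T.card : ℝ) + (Tc.card : ℝ) = (n:ℝ) := by exact_mod_cast hsplit
  have hC : (Tc.card : ℝ) * ((D:ℝ) + 1) ≤ 2 * (m:ℝ) := by exact_mod_cast hTcBound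
  have hE : 4 * (m:ℝ) < ((D:ℝ) + 1) * (n:ℝ) := by exact_mod_cast h4m
  have hF : ((D:ℝ) + 1) * (n:ℝ) ≤ 4 * (m:ℝ) + (n:ℝ) := by
    have : (n:ℝ) * (D:ℝ) ≤ 4 * (m:ℝ) := by exact_mod_cast hnD
    nlinarith
  have hDpos : (0:ℝ) < (D:ℝ) + 1 := by positivity
  have step2 : 2 * (Tc.card : ℝ) < (n:ℝ) := by
    have step1 : 2 * (Tc.card : ℝ) * ((D:ℝ)+1) < (n:ℝ) * ((D:ℝ)+1) := by linarith
    exact lt_of_mul_lt_mul_right step1 hDpos.le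
  have step3 : (n:ℝ) < 2 * (S.card : ℝ) * ((D:ℝ)+1) := by linarith
  have hden : (0:ℝ) < 2 * (4 * (m:ℝ) + (n:ℝ)) := by
    have : (0:ℝ) ≤ (m:ℝ) := Nat.cast_nonneg m
    linarith
  rw [div_le_iff₀ hden]
  have hSnn : (0:ℝ) ≤ (S.card : ℝ) := Nat.cast_nonneg _
  nlinarith [mul_lt_mul_of_pos_right step3 hnR, mul_le_mul_of_nonneg_left hF (by linarith : (0:ℝ) ≤ 2 * (S.card:ℝ))]
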